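/- arXiv:math/0007147 — 2 statements merged into one kernel-verified Lean document; each statement's English description precedes it below -/
import Mathlib

section
/- Let A be a finite-dimensional algebra over a field k, let Forget be the forgetful functor from finite-dimensional left A-modules to vector spaces, and let θ : A → End(Forget) be given by θ(a)_V = (action of a on V). Then θ is an isomorphism of algebras between A and the algebra End(Forget) of natural endomorphisms of the forgetful functor. -/
noncomputable section

/-- A natural endomorphism of the forgetful functor from finite-dimensional `A`-modules to
`k`-vector spaces: a family of `k`-linear maps `V → V`, indexed by all finite-dimensional
`A`-modules `V`, commuting with every `A`-module map. -/
structure NatEnd (k A : Type) [Field k] [Ring A] [Algebra k A] : Type 1 where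
  app : ∀ (V : Type) [AddCommGroup V] [Module k V] [Module A V] [IsScalarTower k A V]
    [SMulCommClass k A V] [FiniteDimensional k V], V →ₗ[k] V
  naturality : ∀ (V W : Type) [AddCommGroup V] [Module k V] [Module A V] [IsScalarTower k A V]
    [SMulCommClass k A V] [FiniteDimensional k V]
    [AddCommGroup W] [Module k W] [Module A W] [IsScalarTower k A W]
    [SMulCommClass k A W] [FiniteDimensional k W]
    (f : V →ₗ[A] W) (v : V), f (app V v) = app W (f v)

/-- The action of `a` on `V` as a `k`-linear map. -/
def thetaApp (k A : Type) [Field k] [Ring A] [Algebra k A] (a : A) (V : Type)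
    [AddCommGroup V] [Module k V] [Module A V] [IsScalarTower k A V]
    [SMulCommClass k A V] [FiniteDimensional k V] : V →ₗ[k] V where
  toFun v := a • v
  map_add' v w := smul_add a v w
  map_smul' c v := (smul_comm c a v).symm

/-- The canonical map `θ : A → End(Forget)`, `θ(a)_V = (action of a on V)`. -/
def theta (k A : Type) [Field k] [Ring A] [Algebra k A] (a : A) : NatEnd k A where
  app := thetaApp k A a
  naturality := by
    intro V W _ _ _ _ _ _ _ _ _ _ _ _ f v
    exact map_smul f a v

/-- For a finite-dimensional algebra `A` over a field `k`, the map
`θ : A → End(Forget)` given by `θ(a)_V = (action of a on V)` is an isomorphism of algebras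
onto the algebra of natural endomorphisms of the forgetful functor (whose multiplication is
componentwise composition). -/
theorem theta_bijective_algebra_iso
    (k A : Type) [Field k] [Ring A] [Algebra k A] [FiniteDimensional k A] :
    Function.Bijective (theta k A) ∧
      (∀ (a b : A) (V : Type) [AddCommGroup V] [Module k V] [Module A V] [IsScalarTower k A V]
          [SMulCommClass k A V] [FiniteDimensional k V] (v : V),
        (theta k A (a * b)).app V v = (theta k A a).app V ((theta k A b).app V v)) ∧
      (∀ (V : Type) [AddCommGroup V] [Module k V] [Module A V] [IsScalarTower k A V]
          [SMulCommClass k A V] [FiniteDimensional k V] (v : V),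
        (theta k A 1).app V v = v) ∧
      (∀ (a b : A) (V : Type) [AddCommGroup V] [Module k V] [Module A V] [IsScalarTower k A V]
          [SMulCommClass k A V] [FiniteDimensional k V] (v : V),
        (theta k A (a + b)).app V v = (theta k A a).app V v + (theta k A b).app V v) ∧
      (∀ (c : k) (a : A) (V : Type) [AddCommGroup V] [Module k V] [Module A V]
          [IsScalarTower k A V] [SMulCommClass k A V] [FiniteDimensional k V] (v : V),
        (theta k A (c • a)).app V v = c • (theta k A a).app V v) := by
  refine ⟨⟨?_, ?_⟩, ?_, ?_, ?_, ?_⟩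
  · intro a b h
    have := congrArg (fun η : NatEnd k A => η.app A 1) h
    simpa [theta, thetaApp] using this
  · intro η
    refine ⟨η.app A 1, ?_⟩
    have happ : ∀ (V : Type) [AddCommGroup V] [Module k V] [Module A V] [IsScalarTower k A V]
        [SMulCommClass k A V] [FiniteDimensional k V] (v : V),
        η.app V v = (η.app A 1) • v := by
      intro V _ _ _ _ _ _ v
      let f : A →ₗ[A] V :=
        { toFun := fun x => x • v
          map_add' := fun x y => add_smul x y v
          map_smul' := fun r x => mul_smul r x v }
      have := (η.naturality A V f 1).symm
      simpa [f] using this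
    cases η with
    | mk app nat =>
      simp only [theta, thetaApp, NatEnd.mk.injEq]
      congr 1
      funext V _ _ _ _ _ _
      ext v
      exact (happ V v).symm
  · intro a b V _ _ _ _ _ _ v
    simp [theta, thetaApp, mul_smul]
  · intro V _ _ _ _ _ _ v
    simp [theta, thetaApp]
  · intro a b V _ _ _ _ _ _ v
    simp [theta, thetaApp, add_smul]
  · intro c a V _ _ _ _ _ _ v
    simp [theta, thetaApp, smul_assoc]
end
end

section
/- Let G be a finite group, k an algebraically closed field of characteristic 0, and J ∈ k[G]⊗k[G] a symmetric twist (J₂₁ = J). Then J is gauge equivalent to 1⊗1: there exists an invertible x ∈ k[G] with ε(x) = 1 such that J = Δ(x)(x⁻¹⊗x⁻¹), i.e. Δ(x) = J(x⊗x). -/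
open TensorProduct

noncomputable section

variable {k : Type*} [CommSemiring k] {A : Type*} [Semiring A] [Algebra k A]

/-- The flip of the two tensor factors of `A ⊗[k] A`. -/
def tau (x : A ⊗[k] A) : A ⊗[k] A := (Algebra.TensorProduct.comm k A A) x

/-- `Δ ⊗ id` as an algebra map `A ⊗ A → (A ⊗ A) ⊗ A`. -/
def D1 (Δ : A →ₐ[k] A ⊗[k] A) : (A ⊗[k] A) →ₐ[k] ((A ⊗[k] A) ⊗[k] A) :=
  Algebra.TensorProduct.map Δ (AlgHom.id k A)

/-- `id ⊗ Δ` as an algebra map `A ⊗ A → A ⊗ (A ⊗ A)`. -/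
def D2 (Δ : A →ₐ[k] A ⊗[k] A) : (A ⊗[k] A) →ₐ[k] (A ⊗[k] (A ⊗[k] A)) :=
  Algebra.TensorProduct.map (AlgHom.id k A) Δ

/-- `x ⊗ y ↦ (x ⊗ 1) ⊗ y`. -/
def e13 : (A ⊗[k] A) →ₐ[k] ((A ⊗[k] A) ⊗[k] A) :=
  Algebra.TensorProduct.map Algebra.TensorProduct.includeLeft (AlgHom.id k A)

/-- `x ⊗ y ↦ (1 ⊗ x) ⊗ y`. -/
def e23 : (A ⊗[k] A) →ₐ[k] ((A ⊗[k] A) ⊗[k] A) :=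
  Algebra.TensorProduct.map Algebra.TensorProduct.includeRight (AlgHom.id k A)

/-- `x ⊗ y ↦ (x ⊗ y) ⊗ 1`. -/
def e12 : (A ⊗[k] A) →ₐ[k] ((A ⊗[k] A) ⊗[k] A) :=
  Algebra.TensorProduct.includeLeft

/-- `x ⊗ y ↦ 1 ⊗ (x ⊗ y)`. -/
def e23r : (A ⊗[k] A) →ₐ[k] (A ⊗[k] (A ⊗[k] A)) :=
  Algebra.TensorProduct.includeRight

/-- The associator. -/
def assoc3 : ((A ⊗[k] A) ⊗[k] A) ≃ₐ[k] (A ⊗[k] (A ⊗[k] A)) :=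
  Algebra.TensorProduct.assoc k k k A A A

/-- `(A, R)` is quasitriangular with respect to the comultiplication `Δ`. -/
structure IsQuasitriangular (Δ : A →ₐ[k] A ⊗[k] A) (R : A ⊗[k] A) : Prop where
  isUnit : IsUnit R
  hex1 : D1 Δ R = e13 R * e23 R
  hex2 : D2 Δ R = assoc3 (e13 R * e12 R)
  intertwine : ∀ a : A, tau (Δ a) * R = R * Δ a

/-- `(A, R)` is triangular: quasitriangular and `R⁻¹ = R₂₁`. -/
structure IsTriangular (Δ : A →ₐ[k] A ⊗[k] A) (R : A ⊗[k] A)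
    extends IsQuasitriangular Δ R : Prop where
  unitary : R * tau R = 1

/-- A (Drinfeld) twist `J` for the bialgebra structure `(Δ, ε)`. -/
structure IsTwist (Δ : A →ₐ[k] A ⊗[k] A) (ε : A →ₐ[k] k) (J : A ⊗[k] A) : Prop where
  isUnit : IsUnit J
  cocycle : assoc3 (D1 Δ J * e12 J) = D2 Δ J * e23r J
  counit_left :
    (Algebra.TensorProduct.lid k A) ((Algebra.TensorProduct.map ε (AlgHom.id k A)) J) = 1
  counit_right :
    (Algebra.TensorProduct.rid k k A) ((Algebra.TensorProduct.map (AlgHom.id k A) ε) J) = 1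

/-- The twisted comultiplication `Δᴶ(x) = J⁻¹ Δ(x) J`. -/
def twistComul (Δ : A →ₐ[k] A ⊗[k] A) (J : A ⊗[k] A) (x : A) : A ⊗[k] A :=
  Ring.inverse J * Δ x * J

/-- The Drinfeld element `u = Σ S(bᵢ) aᵢ` of `R = Σ aᵢ ⊗ bᵢ`. -/
def drinfeldElement (S : A →ₗ[k] A) (R : A ⊗[k] A) : A :=
  LinearMap.mul' k A ((TensorProduct.map S LinearMap.id) (tau R))

/-- The standard comultiplication `Δ(g) = g ⊗ g` on a group algebra, as an algebra map. -/
def gComul (k G : Type*) [CommSemiring k] [Group G] :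
    MonoidAlgebra k G →ₐ[k] MonoidAlgebra k G ⊗[k] MonoidAlgebra k G :=
  MonoidAlgebra.lift k _ G
    { toFun := fun g => MonoidAlgebra.of k G g ⊗ₜ[k] MonoidAlgebra.of k G g
      map_one' := by simp [Algebra.TensorProduct.one_def, MonoidAlgebra.one_def]
      map_mul' := fun g h => by simp [Algebra.TensorProduct.tmul_mul_tmul] }

/-- The standard counit `ε(g) = 1` on a group algebra, as an algebra map. -/
def gCounit (k G : Type*) [CommSemiring k] [Group G] : MonoidAlgebra k G →ₐ[k] k :=
  MonoidAlgebra.lift k k G 1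

set_option maxHeartbeats 1000000
set_option synthInstance.maxHeartbeats 400000

section Aux
variable {k : Type*} [Field k] {G : Type*} [Group G]

lemma gComul_of (g : G) : gComul k G (MonoidAlgebra.of k G g)
    = MonoidAlgebra.of k G g ⊗ₜ[k] MonoidAlgebra.of k G g := by
  simp [gComul]

lemma gCounit_of (g : G) : gCounit k G (MonoidAlgebra.of k G g) = 1 := by
  simp [gCounit]

lemma gCounit_single (g : G) (c : k) : gCounit k G (MonoidAlgebra.single g c) = c := by
  simp [gCounit, MonoidAlgebra.lift_single]

/-- the antipode, as an algebra hom to the opposite algebra -/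
def SaOp : MonoidAlgebra k G →ₐ[k] (MonoidAlgebra k G)ᵐᵒᵖ :=
  MonoidAlgebra.lift k _ G
    { toFun := fun g => MulOpposite.op (MonoidAlgebra.of k G g⁻¹)
      map_one' := by simp [MonoidAlgebra.one_def]
      map_mul' := fun g h => by
        simp [← MulOpposite.op_mul, mul_comm, mul_inv_rev] }

def Smap : MonoidAlgebra k G →ₗ[k] MonoidAlgebra k G :=
  (MulOpposite.opLinearEquiv k).symm.toLinearMap ∘ₗ (SaOp (k := k) (G := G)).toLinearMap

lemma Smap_of (g : G) : Smap (MonoidAlgebra.of k G g) = MonoidAlgebra.of k G g⁻¹ := by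
  simp [Smap, SaOp]

lemma Smap_mul (a b : MonoidAlgebra k G) : Smap (a * b) = Smap b * Smap a := by
  simp [Smap, map_mul]

end Aux

section Aux2
variable {k : Type*} [Field k] {G : Type*} [Group G]

/-- apply `φ ⊗ ψ` to an element of `H ⊗ H`. -/
def app2 (φ ψ : Module.Dual k (MonoidAlgebra k G)) :
    Module.Dual k (MonoidAlgebra k G ⊗[k] MonoidAlgebra k G) :=
  (TensorProduct.lid k k).toLinearMap ∘ₗ TensorProduct.map φ ψ

@[simp] lemma app2_tmul (φ ψ : Module.Dual k (MonoidAlgebra k G)) (a b : MonoidAlgebra k G) :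
    app2 φ ψ (a ⊗ₜ[k] b) = φ a * ψ b := by
  simp [app2, smul_eq_mul]

def app3L (φ ψ χ : Module.Dual k (MonoidAlgebra k G)) :
    Module.Dual k ((MonoidAlgebra k G ⊗[k] MonoidAlgebra k G) ⊗[k] MonoidAlgebra k G) :=
  (TensorProduct.lid k k).toLinearMap ∘ₗ TensorProduct.map (app2 φ ψ) χ

def app3R (φ ψ χ : Module.Dual k (MonoidAlgebra k G)) :
    Module.Dual k (MonoidAlgebra k G ⊗[k] (MonoidAlgebra k G ⊗[k] MonoidAlgebra k G)) :=
  (TensorProduct.lid k k).toLinearMap ∘ₗ TensorProduct.map φ (app2 ψ χ)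

@[simp] lemma app3L_tmul (φ ψ χ : Module.Dual k (MonoidAlgebra k G)) (w a) :
    app3L φ ψ χ (w ⊗ₜ[k] a) = app2 φ ψ w * χ a := by
  simp [app3L, smul_eq_mul]

@[simp] lemma app3R_tmul (φ ψ χ : Module.Dual k (MonoidAlgebra k G)) (a w) :
    app3R φ ψ χ (a ⊗ₜ[k] w) = φ a * app2 ψ χ w := by
  simp [app3R, smul_eq_mul]

lemma app3_assoc (φ ψ χ : Module.Dual k (MonoidAlgebra k G)) :
    app3L φ ψ χ = (app3R φ ψ χ) ∘ₗ
      (Algebra.TensorProduct.assoc k k k (MonoidAlgebra k G) (MonoidAlgebra k G)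
        (MonoidAlgebra k G)).toLinearMap := by
  apply TensorProduct.ext_threefold
  intro x y z
  simp [mul_assoc]

/-- separation by pairs of functionals -/
lemma ext_of_app2 [Fintype G] {w w' : MonoidAlgebra k G ⊗[k] MonoidAlgebra k G}
    (h : ∀ φ ψ : Module.Dual k (MonoidAlgebra k G), app2 φ ψ w = app2 φ ψ w') : w = w' := by
  classical
  let b : Module.Basis G k (MonoidAlgebra k G) := MonoidAlgebra.basis G k
  let B := Module.Basis.tensorProduct b b
  apply B.ext_elem
  intro p
  have key : ∀ (v : MonoidAlgebra k G ⊗[k] MonoidAlgebra k G),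
      B.repr v p = app2 (b.coord p.1) (b.coord p.2) v := by
    intro v
    have : (B.coord p) = app2 (b.coord p.1) (b.coord p.2) := by
      apply TensorProduct.ext'
      intro x y
      simp only [B, Module.Basis.coord_apply, app2_tmul]
      obtain ⟨i, j⟩ := p
      rw [Module.Basis.tensorProduct_repr_tmul_apply, smul_eq_mul, mul_comm]
    rw [← Module.Basis.coord_apply, this]
  rw [key, key, h]
end Aux2


section Aux3
variable {k : Type*} [Field k] {G : Type*} [Group G]

lemma gComul_single1 (g : G) : gComul k G (MonoidAlgebra.single g (1:k))
    = MonoidAlgebra.single g (1:k) ⊗ₜ[k] MonoidAlgebra.single g (1:k) := by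
  rw [← MonoidAlgebra.of_apply]
  exact gComul_of g

lemma coassoc (x : MonoidAlgebra k G) :
    assoc3 (D1 (gComul k G) (gComul k G x)) = D2 (gComul k G) (gComul k G x) := by
  have : ((assoc3 (k := k) (A := MonoidAlgebra k G)).toAlgHom.comp ((D1 (gComul k G)).comp (gComul k G)))
      = (D2 (gComul k G)).comp (gComul k G) := by
    refine MonoidAlgebra.algHom_ext ?_ (Subsingleton.elim _ _)
    intro g
    simp [gComul_single1, D1, D2, assoc3]
  exact congrArg (fun f => f x) (congrArg DFunLike.coe this)

lemma cocomm (x : MonoidAlgebra k G) : tau (gComul k G x) = gComul k G x := by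
  have : ((Algebra.TensorProduct.comm k (MonoidAlgebra k G) (MonoidAlgebra k G)).toAlgHom.comp
      (gComul k G)) = gComul k G := by
    refine MonoidAlgebra.algHom_ext ?_ (Subsingleton.elim _ _)
    intro g
    simp [gComul_single1]
  exact congrArg (fun f => f x) (congrArg DFunLike.coe this)

/-- collapse the first tensor factor with the counit -/
def El : (MonoidAlgebra k G ⊗[k] MonoidAlgebra k G) →ₐ[k] MonoidAlgebra k G :=
  (Algebra.TensorProduct.lid k (MonoidAlgebra k G)).toAlgHom.comp
    (Algebra.TensorProduct.map (gCounit k G) (AlgHom.id k (MonoidAlgebra k G)))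

@[simp] lemma El_tmul (a b : MonoidAlgebra k G) : El (k := k) (G := G) (a ⊗ₜ[k] b) = gCounit k G a • b := by
  simp [El]

lemma El_comul (x : MonoidAlgebra k G) : El (k := k) (G := G) (gComul k G x) = x := by
  have : (El.comp (gComul k G)) = AlgHom.id k (MonoidAlgebra k G) := by
    refine MonoidAlgebra.algHom_ext ?_ (Subsingleton.elim _ _)
    intro g
    simp [gComul_single1, gCounit_single]
  exact congrArg (fun f => f x) (congrArg DFunLike.coe this)

lemma app2_counit_left (ψ : Module.Dual k (MonoidAlgebra k G)) :
    app2 ((gCounit k G).toLinearMap) ψ = ψ ∘ₗ El.toLinearMap := by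
  apply TensorProduct.ext'
  intro a b
  simp [smul_eq_mul, mul_comm]

lemma app2_swap (φ ψ : Module.Dual k (MonoidAlgebra k G)) :
    app2 ψ φ = (app2 φ ψ) ∘ₗ (Algebra.TensorProduct.comm k (MonoidAlgebra k G)
      (MonoidAlgebra k G)).toLinearMap := by
  apply TensorProduct.ext'
  intro a b
  simp [mul_comm]
end Aux3

section Aux4
variable {k : Type*} [Field k] {G : Type*} [Group G]

/-- `x ↦ K * Δ x` -/
def LK (K : MonoidAlgebra k G ⊗[k] MonoidAlgebra k G) :
    MonoidAlgebra k G →ₗ[k] MonoidAlgebra k G ⊗[k] MonoidAlgebra k G :=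
  (LinearMap.mulLeft k K) ∘ₗ (gComul k G).toLinearMap

@[simp] lemma LK_apply (K) (x : MonoidAlgebra k G) : LK K x = K * gComul k G x := rfl

/-- the twisted dual multiplication -/
def mulA (K : MonoidAlgebra k G ⊗[k] MonoidAlgebra k G)
    (φ ψ : Module.Dual k (MonoidAlgebra k G)) : Module.Dual k (MonoidAlgebra k G) :=
  app2 φ ψ ∘ₗ LK K

lemma mulA_apply (K) (φ ψ : Module.Dual k (MonoidAlgebra k G)) (x) :
    mulA K φ ψ x = app2 φ ψ (K * gComul k G x) := rfl

lemma app2_mulA_left (K) (φ ψ χ : Module.Dual k (MonoidAlgebra k G)) :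
    app2 (mulA K φ ψ) χ = app3L φ ψ χ ∘ₗ TensorProduct.map (LK K) LinearMap.id := by
  apply TensorProduct.ext'
  intro a b
  simp [mulA_apply]

lemma app2_mulA_right (K) (φ ψ χ : Module.Dual k (MonoidAlgebra k G)) :
    app2 φ (mulA K ψ χ) = app3R φ ψ χ ∘ₗ TensorProduct.map LinearMap.id (LK K) := by
  apply TensorProduct.ext'
  intro a b
  simp [mulA_apply]

lemma map_LK_id (K) (w : MonoidAlgebra k G ⊗[k] MonoidAlgebra k G) :
    TensorProduct.map (LK K) LinearMap.id w = e12 K * D1 (gComul k G) w := by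
  have : TensorProduct.map (LK K) (LinearMap.id (R := k) (M := MonoidAlgebra k G))
      = LinearMap.mulLeft k (e12 K) ∘ₗ (D1 (gComul k G)).toLinearMap := by
    apply TensorProduct.ext'
    intro a b
    simp [e12, D1, Algebra.TensorProduct.tmul_mul_tmul]
  rw [this]; rfl

lemma map_id_LK (K) (w : MonoidAlgebra k G ⊗[k] MonoidAlgebra k G) :
    TensorProduct.map LinearMap.id (LK K) w = e23r K * D2 (gComul k G) w := by
  have : TensorProduct.map (LinearMap.id (R := k) (M := MonoidAlgebra k G)) (LK K)
      = LinearMap.mulLeft k (e23r K) ∘ₗ (D2 (gComul k G)).toLinearMap := by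
    apply TensorProduct.ext'
    intro a b
    simp [e23r, D2, Algebra.TensorProduct.tmul_mul_tmul]
  rw [this]; rfl

end Aux4


section Aux5
variable {k : Type*} [Field k] {G : Type*} [Group G]
variable (u : (MonoidAlgebra k G ⊗[k] MonoidAlgebra k G)ˣ)

/-- inverted cocycle identity -/
lemma inv_cocycle (hc : assoc3 (D1 (gComul k G) ↑u * e12 (↑u)) = D2 (gComul k G) ↑u * e23r (↑u)) :
    assoc3 (e12 (↑(u⁻¹) : MonoidAlgebra k G ⊗[k] MonoidAlgebra k G) * D1 (gComul k G) ↑(u⁻¹))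
      = e23r (↑(u⁻¹) : MonoidAlgebra k G ⊗[k] MonoidAlgebra k G) * D2 (gComul k G) ↑(u⁻¹) := by
  set J : MonoidAlgebra k G ⊗[k] MonoidAlgebra k G := ↑u
  set K : MonoidAlgebra k G ⊗[k] MonoidAlgebra k G := ↑(u⁻¹)
  have hJK : J * K = 1 := u.mul_inv
  have hKJ : K * J = 1 := u.inv_mul
  set Δ := gComul k G
  have hXP : (e12 K * D1 Δ K) * (D1 Δ J * e12 J) = 1 := by
    calc (e12 K * D1 Δ K) * (D1 Δ J * e12 J)
        = e12 K * (D1 Δ K * D1 Δ J) * e12 J := by simp only [mul_assoc]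
      _ = e12 K * D1 Δ (K * J) * e12 J := by rw [map_mul]
      _ = e12 K * e12 J := by rw [hKJ, map_one, mul_one]
      _ = 1 := by rw [← map_mul, hKJ, map_one]
  have hPX : (D1 Δ J * e12 J) * (e12 K * D1 Δ K) = 1 := by
    calc (D1 Δ J * e12 J) * (e12 K * D1 Δ K)
        = D1 Δ J * (e12 J * e12 K) * D1 Δ K := by simp only [mul_assoc]
      _ = D1 Δ J * D1 Δ K := by rw [← map_mul, hJK, map_one, mul_one]
      _ = 1 := by rw [← map_mul, hJK, map_one]
  have hQY : (D2 Δ J * e23r J) * (e23r K * D2 Δ K) = 1 := by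
    calc (D2 Δ J * e23r J) * (e23r K * D2 Δ K)
        = D2 Δ J * (e23r J * e23r K) * D2 Δ K := by simp only [mul_assoc]
      _ = D2 Δ J * D2 Δ K := by rw [← map_mul, hJK, map_one, mul_one]
      _ = 1 := by rw [← map_mul, hJK, map_one]
  -- assoc3 X is a left inverse of Q := assoc3 P = D2 J * e23r J
  have h1 : assoc3 (e12 K * D1 Δ K) * (D2 Δ J * e23r J) = 1 := by
    rw [← hc, ← map_mul, hXP, map_one]
  exact left_inv_eq_right_inv h1 hQY

lemma tauK (hsym : tau (↑u : MonoidAlgebra k G ⊗[k] MonoidAlgebra k G) = ↑u) :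
    tau (↑(u⁻¹) : MonoidAlgebra k G ⊗[k] MonoidAlgebra k G) = ↑(u⁻¹) := by
  set J : MonoidAlgebra k G ⊗[k] MonoidAlgebra k G := ↑u
  set K : MonoidAlgebra k G ⊗[k] MonoidAlgebra k G := ↑(u⁻¹)
  have h1 : tau K * J = 1 := by
    have : tau K * tau J = tau (K * J) := (map_mul (Algebra.TensorProduct.comm k _ _) K J).symm
    rw [← hsym, this, u.inv_mul, tau]; exact map_one _
  exact left_inv_eq_right_inv h1 u.mul_inv

lemma ElK (hl : El (k := k) (G := G) (↑u : MonoidAlgebra k G ⊗[k] MonoidAlgebra k G) = 1) :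
    El (k := k) (G := G) (↑(u⁻¹) : MonoidAlgebra k G ⊗[k] MonoidAlgebra k G) = 1 := by
  have := map_mul (El (k := k) (G := G)) ((↑(u⁻¹) : MonoidAlgebra k G ⊗[k] MonoidAlgebra k G)) (↑u)
  rw [u.inv_mul, map_one, hl, mul_one] at this
  exact this.symm

end Aux5

section Aux6
variable {k : Type*} [Field k] {G : Type*} [Group G]
variable (u : (MonoidAlgebra k G ⊗[k] MonoidAlgebra k G)ˣ)

lemma mulA_assoc (hc : assoc3 (D1 (gComul k G) ↑u * e12 (↑u)) = D2 (gComul k G) ↑u * e23r (↑u))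
    (φ ψ χ : Module.Dual k (MonoidAlgebra k G)) :
    mulA (↑(u⁻¹)) (mulA (↑(u⁻¹)) φ ψ) χ = mulA (↑(u⁻¹)) φ (mulA (↑(u⁻¹)) ψ χ) := by
  set K : MonoidAlgebra k G ⊗[k] MonoidAlgebra k G := ↑(u⁻¹)
  set Δ := gComul k G
  refine LinearMap.ext fun x => ?_
  have lhs : mulA K (mulA K φ ψ) χ x
      = app3L φ ψ χ (e12 K * D1 Δ K * D1 Δ (Δ x)) := by
    rw [mulA_apply, app2_mulA_left]
    simp only [LinearMap.comp_apply]
    rw [map_LK_id, map_mul (D1 Δ) K (Δ x), ← mul_assoc]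
  have rhs : mulA K φ (mulA K ψ χ) x
      = app3R φ ψ χ (e23r K * D2 Δ K * D2 Δ (Δ x)) := by
    rw [mulA_apply, app2_mulA_right]
    simp only [LinearMap.comp_apply]
    rw [map_id_LK, map_mul (D2 Δ) K (Δ x), ← mul_assoc]
  rw [lhs, rhs, app3_assoc]
  simp only [LinearMap.comp_apply]
  congr 1
  show assoc3 (e12 K * D1 Δ K * D1 Δ (Δ x)) = _
  rw [map_mul, inv_cocycle u hc, coassoc, mul_assoc]

lemma mulA_comm (hsym : tau (↑u : MonoidAlgebra k G ⊗[k] MonoidAlgebra k G) = ↑u)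
    (φ ψ : Module.Dual k (MonoidAlgebra k G)) :
    mulA (↑(u⁻¹)) φ ψ = mulA (↑(u⁻¹)) ψ φ := by
  set K : MonoidAlgebra k G ⊗[k] MonoidAlgebra k G := ↑(u⁻¹)
  refine LinearMap.ext fun x => ?_
  rw [mulA_apply, mulA_apply, app2_swap]
  simp only [LinearMap.comp_apply]
  congr 1
  show tau (K * gComul k G x) = K * gComul k G x
  rw [tau, map_mul]
  show tau K * tau (gComul k G x) = _
  rw [tauK u hsym, cocomm]

lemma mulA_one_left (hl : El (k := k) (G := G) (↑u : MonoidAlgebra k G ⊗[k] MonoidAlgebra k G) = 1)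
    (ψ : Module.Dual k (MonoidAlgebra k G)) :
    mulA (↑(u⁻¹)) ((gCounit k G).toLinearMap) ψ = ψ := by
  refine LinearMap.ext fun x => ?_
  rw [mulA_apply, app2_counit_left]
  simp only [LinearMap.comp_apply, AlgHom.toLinearMap_apply]
  rw [show El (k := k) (G := G) ((↑(u⁻¹) : MonoidAlgebra k G ⊗[k] MonoidAlgebra k G) * gComul k G x)
      = El (k := k) (G := G) (↑(u⁻¹) : MonoidAlgebra k G ⊗[k] MonoidAlgebra k G) * El (k := k) (G := G) (gComul k G x) from
      map_mul (El (k := k) (G := G)) _ _, ElK u hl, El_comul, one_mul]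

end Aux6

section Aux7
variable {k : Type*} [Field k] {G : Type*} [Group G]

lemma app2_add_left (φ φ' ψ : Module.Dual k (MonoidAlgebra k G)) :
    app2 (φ + φ') ψ = app2 φ ψ + app2 φ' ψ := by
  apply TensorProduct.ext'; intro a b; simp [add_mul]

lemma app2_add_right (φ ψ ψ' : Module.Dual k (MonoidAlgebra k G)) :
    app2 φ (ψ + ψ') = app2 φ ψ + app2 φ ψ' := by
  apply TensorProduct.ext'; intro a b; simp [mul_add]

lemma app2_smul_left (c : k) (φ ψ : Module.Dual k (MonoidAlgebra k G)) :
    app2 (c • φ) ψ = c • app2 φ ψ := by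
  apply TensorProduct.ext'; intro a b; simp [mul_assoc]

lemma app2_zero_left (ψ : Module.Dual k (MonoidAlgebra k G)) :
    app2 (0 : Module.Dual k (MonoidAlgebra k G)) ψ = 0 := by
  apply TensorProduct.ext'; intro a b; simp

lemma app2_zero_right (φ : Module.Dual k (MonoidAlgebra k G)) :
    app2 φ (0 : Module.Dual k (MonoidAlgebra k G)) = 0 := by
  apply TensorProduct.ext'; intro a b; simp

lemma mulA_add_left (K) (φ φ' ψ : Module.Dual k (MonoidAlgebra k G)) :
    mulA K (φ + φ') ψ = mulA K φ ψ + mulA K φ' ψ := by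
  unfold mulA; rw [app2_add_left, LinearMap.add_comp]

lemma mulA_add_right (K) (φ ψ ψ' : Module.Dual k (MonoidAlgebra k G)) :
    mulA K φ (ψ + ψ') = mulA K φ ψ + mulA K φ ψ' := by
  unfold mulA; rw [app2_add_right, LinearMap.add_comp]

lemma mulA_smul_left (K) (c : k) (φ ψ : Module.Dual k (MonoidAlgebra k G)) :
    mulA K (c • φ) ψ = c • mulA K φ ψ := by
  unfold mulA; rw [app2_smul_left, LinearMap.smul_comp]

lemma mulA_zero_left (K) (ψ : Module.Dual k (MonoidAlgebra k G)) :
    mulA K 0 ψ = 0 := by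
  unfold mulA; rw [app2_zero_left, LinearMap.zero_comp]

lemma mulA_zero_right (K) (φ : Module.Dual k (MonoidAlgebra k G)) :
    mulA K φ 0 = 0 := by
  unfold mulA; rw [app2_zero_right, LinearMap.zero_comp]

/-- `Φ(a ⊗ b) = S(a) b` -/
def Phi : MonoidAlgebra k G ⊗[k] MonoidAlgebra k G →ₗ[k] MonoidAlgebra k G :=
  LinearMap.mul' k (MonoidAlgebra k G) ∘ₗ TensorProduct.map Smap LinearMap.id

@[simp] lemma Phi_tmul (a b : MonoidAlgebra k G) : Phi (a ⊗ₜ[k] b) = Smap a * b := by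
  simp [Phi]

lemma Phi_comul (x : MonoidAlgebra k G) : Phi (gComul k G x) = gCounit k G x • 1 := by
  have : (Phi ∘ₗ (gComul k G).toLinearMap)
      = ((gCounit k G).toLinearMap).smulRight (1 : MonoidAlgebra k G) := by
    apply MonoidAlgebra.lhom_ext'
    intro g
    apply LinearMap.ext
    intro c
    have h1 : (MonoidAlgebra.single g c : MonoidAlgebra k G)
        = c • MonoidAlgebra.of k G g := by
      rw [MonoidAlgebra.of_apply, MonoidAlgebra.smul_single', mul_one]
    simp only [LinearMap.comp_apply, MonoidAlgebra.lsingle_apply, LinearMap.smulRight_apply,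
      AlgHom.toLinearMap_apply, h1, map_smul]
    rw [gComul_of, gCounit_of, Phi_tmul, Smap_of, ← map_mul, inv_mul_cancel, map_one]
    simp
  exact congrArg (fun f => f x) (congrArg DFunLike.coe this)

lemma Phi_mul_xx (x : MonoidAlgebra k G) (w : MonoidAlgebra k G ⊗[k] MonoidAlgebra k G) :
    Phi (w * (x ⊗ₜ[k] x)) = Smap x * Phi w * x := by
  have key : Phi ∘ₗ LinearMap.mulRight k (x ⊗ₜ[k] x)
      = LinearMap.mulRight k x ∘ₗ LinearMap.mulLeft k (Smap x) ∘ₗ Phi := by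
    apply TensorProduct.ext'
    intro a b
    simp only [LinearMap.comp_apply, LinearMap.mulRight_apply, LinearMap.mulLeft_apply,
      Algebra.TensorProduct.tmul_mul_tmul, Phi_tmul, Smap_mul]
    rw [mul_assoc, mul_assoc, mul_assoc]
  exact congrArg (fun f => f w) (congrArg DFunLike.coe key)

end Aux7

/-- Over an algebraically closed field of characteristic `0`, any symmetric
twist `J` (i.e. `J₂₁ = J`) for the group algebra of a finite group `G` is gauge equivalent to
`1 ⊗ 1`: there is an invertible `x ∈ k[G]` with `ε(x) = 1` and `Δ(x) = J (x ⊗ x)`. -/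
theorem symmetric_twist_is_gauge_trivial
    {k : Type*} [Field k] [IsAlgClosed k] [CharZero k]
    {G : Type*} [Group G] [Fintype G]
    (J : MonoidAlgebra k G ⊗[k] MonoidAlgebra k G)
    (hJ : IsTwist (gComul k G) (gCounit k G) J)
    (hsym : tau J = J) :
    ∃ x : MonoidAlgebra k G, IsUnit x ∧ gCounit k G x = 1 ∧
      gComul k G x = J * (x ⊗ₜ[k] x) := by
  classical
  obtain ⟨u, hu⟩ := hJ.isUnit
  haveI : Module.Finite k (MonoidAlgebra k G) :=
    Module.Finite.of_basis (MonoidAlgebra.basis G k : Module.Basis G k (MonoidAlgebra k G))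
  set K : MonoidAlgebra k G ⊗[k] MonoidAlgebra k G := ((u⁻¹ : (MonoidAlgebra k G ⊗[k] MonoidAlgebra k G)ˣ) : MonoidAlgebra k G ⊗[k] MonoidAlgebra k G) with hK
  have hJK : J * K = 1 := by rw [← hu]; exact u.mul_inv
  have hc : assoc3 (D1 (gComul k G) ↑u * e12 (↑u : MonoidAlgebra k G ⊗[k] MonoidAlgebra k G))
      = D2 (gComul k G) ↑u * e23r (↑u : MonoidAlgebra k G ⊗[k] MonoidAlgebra k G) := by
    rw [hu]; exact hJ.cocycle
  have hs : tau (↑u : MonoidAlgebra k G ⊗[k] MonoidAlgebra k G) = ↑u := by rw [hu]; exact hsym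
  have hEl : El (k := k) (G := G) (↑u : MonoidAlgebra k G ⊗[k] MonoidAlgebra k G) = 1 := by
    rw [hu]; exact hJ.counit_left
  letI ringA : CommRing (Module.Dual k (MonoidAlgebra k G)) :=
    { (inferInstance : AddCommGroup (Module.Dual k (MonoidAlgebra k G))) with
      mul := mulA K
      one := (gCounit k G).toLinearMap
      mul_assoc := mulA_assoc u hc
      one_mul := mulA_one_left u hEl
      mul_one := fun φ => by
        have h := mulA_comm u hs φ (gCounit k G).toLinearMap
        exact h.trans (mulA_one_left u hEl φ)
      left_distrib := fun a b c => mulA_add_right K a b c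
      right_distrib := fun a b c => mulA_add_left K a b c
      zero_mul := fun a => mulA_zero_left K a
      mul_zero := fun a => mulA_zero_right K a
      mul_comm := mulA_comm u hs }
  letI algA : Algebra k (Module.Dual k (MonoidAlgebra k G)) :=
    Algebra.ofModule (fun r x y => mulA_smul_left K r x y)
      (fun r x y => by
        rw [mul_comm x (r • y), mul_comm x y]
        exact mulA_smul_left K r y x)
  haveI : Nontrivial (Module.Dual k (MonoidAlgebra k G)) := by
    refine ⟨⟨1, 0, fun h => ?_⟩⟩
    have h1 : (1 : Module.Dual k (MonoidAlgebra k G)) (1 : MonoidAlgebra k G) = 1 := by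
      show gCounit k G 1 = 1
      exact map_one _
    rw [h] at h1
    simp at h1
  obtain ⟨m, hm⟩ := Ideal.exists_maximal (Module.Dual k (MonoidAlgebra k G))
  haveI := hm
  letI : Field ((Module.Dual k (MonoidAlgebra k G)) ⧸ m) := Ideal.Quotient.field m
  haveI hfinA : Module.Finite k (Module.Dual k (MonoidAlgebra k G)) := inferInstance
  haveI : Module.Finite k ((Module.Dual k (MonoidAlgebra k G)) ⧸ m) :=
    Module.Finite.of_surjective (Ideal.Quotient.mkₐ k m).toLinearMap
      (Ideal.Quotient.mkₐ_surjective k m)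
  haveI : Algebra.IsIntegral k ((Module.Dual k (MonoidAlgebra k G)) ⧸ m) :=
    Algebra.IsIntegral.of_finite k _
  have hsur : Function.Surjective (algebraMap k ((Module.Dual k (MonoidAlgebra k G)) ⧸ m)) :=
    IsAlgClosed.algebraMap_bijective_of_isIntegral.2
  have hinj : Function.Injective (algebraMap k ((Module.Dual k (MonoidAlgebra k G)) ⧸ m)) :=
    RingHom.injective _
  let e : k ≃ₐ[k] ((Module.Dual k (MonoidAlgebra k G)) ⧸ m) :=
    AlgEquiv.ofBijective (Algebra.ofId k _) ⟨hinj, hsur⟩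
  let χ : (Module.Dual k (MonoidAlgebra k G)) →ₐ[k] k :=
    e.symm.toAlgHom.comp (Ideal.Quotient.mkₐ k m)
  let χl : Module.Dual k (Module.Dual k (MonoidAlgebra k G)) :=
    { toFun := χ
      map_add' := fun a b => map_add χ a b
      map_smul' := fun r φ => by
        rw [Algebra.smul_def]
        show χ _ = _
        rw [map_mul, AlgHom.commutes]
        simp }
  set x : MonoidAlgebra k G := (Module.evalEquiv k (MonoidAlgebra k G)).symm χl with hxdef
  have hxapp : ∀ φ : Module.Dual k (MonoidAlgebra k G), φ x = χ φ := fun φ =>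
    Module.apply_evalEquiv_symm_apply k (MonoidAlgebra k G) φ χl
  have hone : gCounit k G x = 1 := by
    have h := hxapp (gCounit k G).toLinearMap
    rw [AlgHom.toLinearMap_apply] at h
    rw [h]
    exact map_one χ
  have hmul : K * gComul k G x = x ⊗ₜ[k] x := by
    apply ext_of_app2
    intro φ ψ
    have h1 : app2 φ ψ (K * gComul k G x) = mulA K φ ψ x := rfl
    have h3 : χ (mulA K φ ψ) = χ φ * χ ψ := map_mul χ φ ψ
    rw [h1, hxapp (mulA K φ ψ), h3, app2_tmul, hxapp, hxapp]
  have hDelta : gComul k G x = J * (x ⊗ₜ[k] x) := by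
    rw [← hmul, ← mul_assoc, hJK, one_mul]
  have hPhi1 : Phi (gComul k G x) = 1 := by
    rw [Phi_comul, hone, one_smul]
  have hax : (Smap x * Phi J) * x = 1 := by
    have h2 := Phi_mul_xx x J
    rw [← hDelta, hPhi1] at h2
    exact h2.symm
  have hsurj : Function.Surjective (LinearMap.mulRight k x :
      MonoidAlgebra k G →ₗ[k] MonoidAlgebra k G) := by
    intro y
    refine ⟨y * (Smap x * Phi J), ?_⟩
    rw [LinearMap.mulRight_apply, mul_assoc, hax, mul_one]
  have hinj2 := (LinearMap.injective_iff_surjective).mpr hsurj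
  have hxa : x * (Smap x * Phi J) = 1 := by
    apply hinj2
    simp only [LinearMap.mulRight_apply]
    rw [mul_assoc, hax, mul_one, one_mul]
  exact ⟨x, ⟨⟨x, Smap x * Phi J, hxa, hax⟩, rfl⟩, hone, hDelta⟩
end
end
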